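/- Let K be a field and let A be a monomial algebra over K that is amenable as a right module over itself. Then for every finite-dimensional subspace V ≤ A and every ε > 0 there exists a (V,ε)-invariant finite-dimensional subspace of A spanned by monomials. Furthermore, if A is exhaustively amenable as a right module over itself, then A has a Følner sequence consisting of subspaces spanned by monomials. -/

import Mathlib

noncomputable section

namespace Paper

open Module Filter MulOpposite

/-- The free associative unital `K`-algebra on a set `σ` of generators,
realized as the monoid algebra of the free monoid on `σ`. -/
abbrev FreeAlg (K : Type) [Field K] (σ : Type) : Type := MonoidAlgebra K (FreeMonoid σ)

/-- The monomial of the free algebra corresponding to a word `w`. -/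
def wrd (K : Type) [Field K] {σ : Type} (w : List σ) : FreeAlg K σ :=
  MonoidAlgebra.of K (FreeMonoid σ) (FreeMonoid.ofList w)

variable (K : Type) [Field K]

section Defs

variable {σ : Type} {A : Type} [Ring A] [Algebra K A]

/-- `a` is a monomial of `A` (i.e. the image of a word under the presentation `π`). -/
def IsMono (π : FreeAlg K σ →ₐ[K] A) (a : A) : Prop :=
  ∃ w : List σ, a = π (wrd K w)

/-- `a` is a monomial of `A` of length `D`. -/
def IsMonoLen (π : FreeAlg K σ →ₐ[K] A) (D : ℕ) (a : A) : Prop :=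
  ∃ w : List σ, w.length = D ∧ a = π (wrd K w)

/-- `π` presents `A` as a monomial algebra: `π` is onto and its kernel is spanned by the
monomials it contains (equivalently, it is generated as a two-sided ideal by monomials). -/
def MonomialPresentation (π : FreeAlg K σ →ₐ[K] A) : Prop :=
  Function.Surjective π ∧
    ∀ a : FreeAlg K σ, π a = 0 ↔
      a ∈ Submodule.span K {m : FreeAlg K σ | ∃ w : List σ, m = wrd K w ∧ π (wrd K w) = 0}

/-- Every nonzero monomial of `A` is right prolongable. -/
def RightProlongable (π : FreeAlg K σ →ₐ[K] A) : Prop :=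
  ∀ a : A, IsMono K π a → a ≠ 0 → ∃ w : List σ, w ≠ [] ∧ a * π (wrd K w) ≠ 0

/-- A subspace of `A` spanned by monomials. -/
def MonomialSubspace (π : FreeAlg K σ →ₐ[K] A) (L : Submodule K A) : Prop :=
  ∃ S : Set (List σ), L = Submodule.span K ((fun w => π (wrd K w)) '' S)

/-- The standard generating subspace, spanned by `1` together with the generators. -/
def genV (π : FreeAlg K σ →ₐ[K] A) : Submodule K A :=
  Submodule.span K ({1} ∪ Set.range fun i : σ => π (wrd K [i]))

end Defs

section Amen

/-- `L` is a `(V, ε)`-invariant subspace of `A`, viewed as a right module over itself: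
`dim (L·V) < (1+ε) · dim L`. -/
def RInv {A : Type} [Ring A] [Algebra K A] (L V : Submodule K A) (ε : ℝ) : Prop :=
  FiniteDimensional K L ∧ FiniteDimensional K (L * V : Submodule K A) ∧
    (finrank K (L * V : Submodule K A) : ℝ) < (1 + ε) * (finrank K L : ℝ)

/-- `L` is a `(V, ε)`-invariant subspace of `A`, viewed as a left module over itself. -/
def LInv {A : Type} [Ring A] [Algebra K A] (L V : Submodule K A) (ε : ℝ) : Prop :=
  FiniteDimensional K L ∧ FiniteDimensional K (V * L : Submodule K A) ∧
    (finrank K (V * L : Submodule K A) : ℝ) < (1 + ε) * (finrank K L : ℝ)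

/-- `A` is amenable as a right module over itself. -/
def RightSelfAmenable (A : Type) [Ring A] [Algebra K A] : Prop :=
  ∀ V : Submodule K A, FiniteDimensional K V → ∀ ε : ℝ, 0 < ε →
    ∃ L : Submodule K A, RInv K L V ε

/-- `A` is exhaustively amenable as a right module over itself. -/
def RightSelfExhAmenable (A : Type) [Ring A] [Algebra K A] : Prop :=
  ∀ V : Submodule K A, FiniteDimensional K V → ∀ ε : ℝ, 0 < ε →
    ∀ W : Submodule K A, FiniteDimensional K W →
      ∃ L : Submodule K A, W ≤ L ∧ RInv K L V ε

/-- `A` is exhaustively amenable as a left module over itself. -/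
def LeftSelfExhAmenable (A : Type) [Ring A] [Algebra K A] : Prop :=
  ∀ V : Submodule K A, FiniteDimensional K V → ∀ ε : ℝ, 0 < ε →
    ∀ W : Submodule K A, FiniteDimensional K W →
      ∃ L : Submodule K A, W ≤ L ∧ LInv K L V ε

/-- For a right `A`-module `M` (encoded via an `Aᵐᵒᵖ`-action), the subspace `L·V`,
spanned by `{ℓ·v : ℓ ∈ L, v ∈ V}`. -/
def rLV {A M : Type} [Ring A] [Algebra K A] [AddCommGroup M] [Module K M] [Module Aᵐᵒᵖ M]
    (L : Submodule K M) (V : Submodule K A) : Submodule K M :=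
  Submodule.span K {x : M | ∃ l ∈ L, ∃ v ∈ V, x = (op v) • l}

/-- `L` is a `(V, ε)`-invariant subspace of the right `A`-module `M`. -/
def RModInv {A M : Type} [Ring A] [Algebra K A] [AddCommGroup M] [Module K M] [Module Aᵐᵒᵖ M]
    (L : Submodule K M) (V : Submodule K A) (ε : ℝ) : Prop :=
  FiniteDimensional K L ∧ FiniteDimensional K (rLV K L V) ∧
    (finrank K (rLV K L V) : ℝ) < (1 + ε) * (finrank K L : ℝ)

/-- The right `A`-module `M` is amenable. -/
def RModAmenable (A M : Type) [Ring A] [Algebra K A] [AddCommGroup M] [Module K M]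
    [Module Aᵐᵒᵖ M] [IsScalarTower K Aᵐᵒᵖ M] : Prop :=
  ∀ V : Submodule K A, FiniteDimensional K V → ∀ ε : ℝ, 0 < ε →
    ∃ L : Submodule K M, RModInv K L V ε

/-- The right `A`-module `M` is exhaustively amenable. -/
def RModExhAmenable (A M : Type) [Ring A] [Algebra K A] [AddCommGroup M] [Module K M]
    [Module Aᵐᵒᵖ M] [IsScalarTower K Aᵐᵒᵖ M] : Prop :=
  ∀ V : Submodule K A, FiniteDimensional K V → ∀ ε : ℝ, 0 < ε →
    ∀ W : Submodule K M, FiniteDimensional K W →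
      ∃ L : Submodule K M, W ≤ L ∧ RModInv K L V ε

/-- For a left `A`-module `M`, the subspace `V·L`, spanned by `{v·ℓ : ℓ ∈ L, v ∈ V}`. -/
def lVL {A M : Type} [Ring A] [Algebra K A] [AddCommGroup M] [Module K M] [Module A M]
    (L : Submodule K M) (V : Submodule K A) : Submodule K M :=
  Submodule.span K {x : M | ∃ l ∈ L, ∃ v ∈ V, x = v • l}

/-- `L` is a `(V, ε)`-invariant subspace of the left `A`-module `M`. -/
def LModInv {A M : Type} [Ring A] [Algebra K A] [AddCommGroup M] [Module K M] [Module A M]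
    (L : Submodule K M) (V : Submodule K A) (ε : ℝ) : Prop :=
  FiniteDimensional K L ∧ FiniteDimensional K (lVL K L V) ∧
    (finrank K (lVL K L V) : ℝ) < (1 + ε) * (finrank K L : ℝ)

/-- The left `A`-module `M` is exhaustively amenable. -/
def LModExhAmenable (A M : Type) [Ring A] [Algebra K A] [AddCommGroup M] [Module K M]
    [Module A M] [IsScalarTower K A M] : Prop :=
  ∀ V : Submodule K A, FiniteDimensional K V → ∀ ε : ℝ, 0 < ε →
    ∀ W : Submodule K M, FiniteDimensional K W →
      ∃ L : Submodule K M, W ≤ L ∧ LModInv K L V ε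

/-- A Følner sequence for `A` as a right module over itself, with respect to the
generating subspace `V`. -/
def FolnerSeq {A : Type} [Ring A] [Algebra K A] (V : Submodule K A)
    (L : ℕ → Submodule K A) : Prop :=
  Monotone L ∧ (∀ n, FiniteDimensional K (L n)) ∧ (⨆ n, L n) = (⊤ : Submodule K A) ∧
    Tendsto (fun n => (finrank K (L n * V : Submodule K A) : ℝ) / (finrank K (L n) : ℝ))
      atTop (nhds 1)

/-- The isoperimetric profile of `A` with respect to `V`:
`I(n) = inf {dim((W·V + W)/W) : dim W = n}`. -/
def isoProfile {A : Type} [Ring A] [Algebra K A] (V : Submodule K A) (n : ℕ) : ℕ :=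
  sInf {k : ℕ | ∃ W : Submodule K A, FiniteDimensional K W ∧ finrank K W = n ∧
    FiniteDimensional K (W ⊔ W * V : Submodule K A) ∧
    k = finrank K (W ⊔ W * V : Submodule K A) - finrank K W}

end Amen

section Words

variable {σ : Type}

/-- The shift on bi-infinite words. -/
def shiftZ (s : ℤ → σ) : ℤ → σ := fun n => s (n + 1)

/-- The word `u` occurs in the bi-infinite word `s` at position `k`. -/
def OccursAt (u : List σ) (s : ℤ → σ) (k : ℤ) : Prop :=
  ∀ i : Fin u.length, s (k + (i : ℕ)) = u.get i

/-- `u` is a (finite) factor of the bi-infinite word `s`. -/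
def FactorZ (u : List σ) (s : ℤ → σ) : Prop := ∃ k : ℤ, OccursAt u s k

/-- `u` is a factor of the subshift `X`. -/
def FactorOfX (u : List σ) (X : Set (ℤ → σ)) : Prop := ∃ s ∈ X, FactorZ u s

/-- `s` is recurrent: every factor occurs at infinitely many positions. -/
def RecurrentZ (s : ℤ → σ) : Prop :=
  ∀ u : List σ, FactorZ u s → {k : ℤ | OccursAt u s k}.Infinite

/-- `s` is uniformly recurrent: for every factor `u` there is `N` such that every
factor of `s` of length `N` contains an occurrence of `u`. -/
def UnifRecurrentZ (s : ℤ → σ) : Prop :=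
  ∀ u : List σ, FactorZ u s → ∃ N : ℕ, ∀ v : List σ, FactorZ v s → v.length = N → u <:+: v

/-- `X ⊆ σ^ℤ` is a subshift: nonempty, closed and shift-invariant. -/
def IsSubshift [TopologicalSpace σ] (X : Set (ℤ → σ)) : Prop :=
  X.Nonempty ∧ IsClosed X ∧ ∀ s ∈ X, shiftZ s ∈ X

/-- `X` is a minimal subshift. -/
def IsMinimalSubshift [TopologicalSpace σ] (X : Set (ℤ → σ)) : Prop :=
  IsSubshift X ∧
    ∀ Y : Set (ℤ → σ), Y ⊆ X → IsClosed Y → (∀ s ∈ Y, shiftZ s ∈ Y) → Y = ∅ ∨ Y = X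

/-- `X` is a transitive subshift: some element has dense shift-orbit. -/
def IsTransitiveSubshift [TopologicalSpace σ] (X : Set (ℤ → σ)) : Prop :=
  IsSubshift X ∧ ∃ s ∈ X, closure {t : ℤ → σ | ∃ n : ℤ, t = fun m => s (m + n)} = X

/-- The word `u` occurs in the right-infinite word `s` at position `k`. -/
def OccursAtN (u : List σ) (s : ℕ → σ) (k : ℕ) : Prop :=
  ∀ i : Fin u.length, s (k + (i : ℕ)) = u.get i

/-- `u` is a factor of the right-infinite word `s`. -/
def FactorN (u : List σ) (s : ℕ → σ) : Prop := ∃ k : ℕ, OccursAtN u s k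

/-- A right-infinite word is uniformly recurrent. -/
def UnifRecurrentN (s : ℕ → σ) : Prop :=
  ∀ u : List σ, FactorN u s → ∃ N : ℕ, ∀ v : List σ, FactorN v s → v.length = N → u <:+: v

end Words

end Paper

namespace Paper

open Module Filter

-- ===== auxiliary material =====
section Aux

/-- Base-(d+1) encoding of words over `Fin d`, most significant letter first. -/
def enc (d : ℕ) : List (Fin d) → ℕ
  | [] => 0
  | a :: w => ((a : ℕ) + 1) * (d + 1) ^ w.length + enc d w

lemma enc_lt (d : ℕ) (w : List (Fin d)) : enc d w < (d + 1) ^ w.length := by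
  induction w with
  | nil => simp [enc]
  | cons a w ih =>
      have ha : (a : ℕ) + 2 ≤ d + 1 := by have := a.isLt; omega
      have h1 : enc d (a :: w) < ((a : ℕ) + 2) * (d + 1) ^ w.length := by
        simp only [enc]; nlinarith
      have h2 : ((a : ℕ) + 2) * (d + 1) ^ w.length ≤ (d + 1) * (d + 1) ^ w.length :=
        Nat.mul_le_mul_right _ ha
      calc enc d (a :: w) < ((a : ℕ) + 2) * (d + 1) ^ w.length := h1
        _ ≤ (d + 1) * (d + 1) ^ w.length := h2
        _ = (d + 1) ^ (a :: w).length := by rw [List.length_cons]; ring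

lemma le_enc (d : ℕ) (w : List (Fin d)) (hw : w ≠ []) :
    (d + 1) ^ (w.length - 1) ≤ enc d w := by
  match w with
  | a :: w =>
      simp only [enc, List.length_cons, Nat.add_sub_cancel]
      have : 1 * (d + 1) ^ w.length ≤ ((a : ℕ) + 1) * (d + 1) ^ w.length :=
        Nat.mul_le_mul_right _ (by omega)
      omega

lemma enc_append (d : ℕ) (u x : List (Fin d)) :
    enc d (u ++ x) = enc d u * (d + 1) ^ x.length + enc d x := by
  induction u with
  | nil => simp [enc]
  | cons a u ih =>
      simp only [List.cons_append, enc, List.append_eq, ih, List.length_append, pow_add]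
      ring

lemma enc_length_eq (d : ℕ) {u v : List (Fin d)} (h : enc d u = enc d v) :
    u.length = v.length := by
  by_contra hne
  wlog hlt : u.length < v.length generalizing u v
  · exact this h.symm (Ne.symm hne) (by omega)
  have hv : v ≠ [] := by intro h0; simp [h0] at hlt
  have h1 : enc d u < (d + 1) ^ u.length := enc_lt d u
  have h2 : (d + 1) ^ (v.length - 1) ≤ enc d v := le_enc d v hv
  have h3 : (d + 1) ^ u.length ≤ (d + 1) ^ (v.length - 1) :=
    Nat.pow_le_pow_right (by omega) (by omega)
  omega

lemma enc_injective (d : ℕ) : Function.Injective (enc d) := by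
  intro u v h
  induction u generalizing v with
  | nil =>
      match v with
      | [] => rfl
      | b :: v =>
          exfalso
          have h1 := le_enc d (b :: v) (by simp)
          have h2 : 0 < (d+1) ^ ((b :: v).length - 1) := Nat.pow_pos (by omega)
          have h3 : enc d ([] : List (Fin d)) = 0 := rfl
          omega
  | cons a u ih =>
      match v with
      | [] =>
          exfalso
          have h1 := le_enc d (a :: u) (by simp)
          have h2 : 0 < (d+1) ^ ((a :: u).length - 1) := Nat.pow_pos (by omega)
          have h3 : enc d ([] : List (Fin d)) = 0 := rfl
          omega
      | b :: v =>
          have hlen : u.length = v.length := by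
            have := enc_length_eq d h
            simpa using this
          simp only [enc, hlen] at h
          have h1 : enc d u < (d + 1) ^ v.length := hlen ▸ enc_lt d u
          have h2 : enc d v < (d + 1) ^ v.length := enc_lt d v
          have hab : (a : ℕ) = (b : ℕ) := by
            rcases Nat.lt_trichotomy (a : ℕ) (b : ℕ) with hl | he | hl
            · exfalso; nlinarith
            · exact he
            · exfalso; nlinarith
          have huv : enc d u = enc d v := by
            have : ((a:ℕ)+1) * (d+1) ^ v.length = ((b:ℕ)+1) * (d+1) ^ v.length := by rw [hab]
            omega
          have : a = b := Fin.ext hab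
          rw [this, ih huv]

lemma enc_append_le (d : ℕ) {u u' : List (Fin d)} (h : enc d u ≤ enc d u') (x : List (Fin d)) :
    enc d (u ++ x) ≤ enc d (u' ++ x) := by
  rw [enc_append, enc_append]
  have := Nat.mul_le_mul_right ((d+1) ^ x.length) h
  omega

lemma enc_finite_le (d n : ℕ) : {w : List (Fin d) | enc d w ≤ n}.Finite := by
  have : {w : List (Fin d) | enc d w ≤ n} ⊆ enc d ⁻¹' (Set.Iic n) := fun w hw => hw
  exact Set.Finite.subset (Set.Finite.preimage (enc_injective d).injOn (Set.finite_Iic n)) this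

variable {K : Type} [Field K] {σ : Type} {A : Type} [Ring A] [Algebra K A]

lemma wrd_append (u x : List σ) : wrd K (u ++ x) = wrd K u * wrd K x := by
  unfold wrd
  rw [show FreeMonoid.ofList (u ++ x) = FreeMonoid.ofList u * FreeMonoid.ofList x from rfl,
    map_mul]

lemma wrd_nil : wrd K ([] : List σ) = 1 := by
  unfold wrd
  rw [show FreeMonoid.ofList ([] : List σ) = 1 from rfl, map_one]

lemma wrd_eq_single (w : List σ) :
    wrd K w = MonoidAlgebra.single (FreeMonoid.ofList w) (1 : K) := by
  unfold wrd; rw [MonoidAlgebra.of_apply]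

/-- coefficient functional on the free algebra -/
def coeff (K : Type) [Field K] {σ : Type} (pt : FreeMonoid σ) : FreeAlg K σ →ₗ[K] K :=
  Finsupp.lapply pt ∘ₗ (MonoidAlgebra.coeffLinearEquiv K).toLinearMap

lemma coeff_wrd_self (w : List σ) :
    coeff K (FreeMonoid.ofList w) (wrd K w) = (1:K) := by
  rw [wrd_eq_single]
  exact Finsupp.single_eq_same (a := FreeMonoid.ofList w) (b := (1:K))

lemma coeff_wrd_ne {pt : FreeMonoid σ} {w : List σ} (h : FreeMonoid.ofList w ≠ pt) :
    coeff K pt (wrd K w) = 0 := by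
  rw [wrd_eq_single]
  exact Finsupp.single_eq_of_ne' (b := (1:K)) h

variable (π : FreeAlg K σ →ₐ[K] A)

/-- the set of words with nonzero image -/
def NZ : Set (List σ) := {w | π (wrd K w) ≠ 0}

lemma coeff_span_zero (w₀ : List σ) (hw₀ : π (wrd K w₀) ≠ 0) :
    ∀ g ∈ Submodule.span K
      {m : FreeAlg K σ | ∃ w : List σ, m = wrd K w ∧ π (wrd K w) = 0},
      coeff K (FreeMonoid.ofList w₀) g = 0 := by
  intro g hg
  induction hg using Submodule.span_induction with
  | mem m hm =>
      obtain ⟨w, rfl, hw⟩ := hm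
      by_cases h : FreeMonoid.ofList w = FreeMonoid.ofList w₀
      · exfalso
        have : w = w₀ := FreeMonoid.ofList.injective h
        rw [this] at hw; exact hw₀ hw
      · exact coeff_wrd_ne h
  | zero => exact map_zero _
  | add x y _ _ hx hy => rw [map_add, hx, hy, add_zero]
  | smul c x _ hx => rw [map_smul, hx, smul_zero]

lemma bas_indep (hπ : MonomialPresentation K π) :
    LinearIndependent K (fun w : NZ π => π (wrd K (w : List σ))) := by
  classical
  rw [linearIndependent_iff]
  intro l hl
  ext w₀
  set g : FreeAlg K σ := Finsupp.linearCombination K (fun w : NZ π => wrd K (w : List σ)) l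
    with hgdef
  have hπg : π g = 0 := by
    have h1 : π g = Finsupp.linearCombination K
        (fun w : NZ π => π (wrd K (w : List σ))) l := by
      rw [hgdef]
      exact (Finsupp.apply_linearCombination K π.toLinearMap _ l)
    rw [h1, hl]
  have hmem := (hπ.2 g).mp hπg
  have h0 := coeff_span_zero π w₀.1 w₀.2 g hmem
  have hval : coeff K (FreeMonoid.ofList w₀.1) g = l w₀ := by
    rw [hgdef, Finsupp.linearCombination_apply, map_finsuppSum]
    have key : ∀ w : NZ π, ∀ c : K,
        coeff K (FreeMonoid.ofList w₀.1) (c • wrd K (w : List σ)) =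
          if w = w₀ then c else 0 := by
      intro w c
      rw [map_smul, smul_eq_mul]
      by_cases h : w = w₀
      · subst h; rw [coeff_wrd_self, mul_one, if_pos rfl]
      · have hne : FreeMonoid.ofList (w : List σ) ≠ FreeMonoid.ofList w₀.1 := by
          intro he
          exact h (Subtype.ext (FreeMonoid.ofList.injective he))
        rw [coeff_wrd_ne hne, mul_zero, if_neg h]
    rw [Finsupp.sum, Finset.sum_congr rfl (fun w _ => key w (l w)),
      Finset.sum_ite_eq' l.support w₀ (fun w => l w)]
    split
    · rfl
    · next h => exact (Finsupp.notMem_support_iff.mp h).symm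
  rw [hval] at h0
  simpa using h0

lemma bas_span (hπ : MonomialPresentation K π) :
    ⊤ ≤ Submodule.span K (Set.range fun w : NZ π => π (wrd K (w : List σ))) := by
  intro a ha
  clear ha
  obtain ⟨f, rfl⟩ := hπ.1 a
  induction f using MonoidAlgebra.induction with
  | zero => rw [map_zero]; exact Submodule.zero_mem _
  | single_add m c f _ _ ih =>
      rw [map_add]
      refine Submodule.add_mem _ ?_ ih
      have h1 : (MonoidAlgebra.single m c : FreeAlg K σ) = c • wrd K (FreeMonoid.toList m) := by
        rw [wrd_eq_single, FreeMonoid.ofList_toList, MonoidAlgebra.smul_single', mul_one]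
      rw [h1, map_smul]
      refine Submodule.smul_mem _ _ ?_
      by_cases h : π (wrd K (FreeMonoid.toList m)) = 0
      · rw [h]; exact Submodule.zero_mem _
      · exact Submodule.subset_span ⟨⟨_, h⟩, rfl⟩

/-- The monomial basis of a monomial algebra. -/
def bas (hπ : MonomialPresentation K π) : Basis (NZ π) K A :=
  Basis.mk (bas_indep π hπ) (bas_span π hπ)

@[simp] lemma bas_apply (hπ : MonomialPresentation K π) (w : NZ π) :
    bas π hπ w = π (wrd K (w : List σ)) := by
  rw [bas, Basis.mk_apply]

end Aux


section Lead

variable {K : Type} [Field K] {d : ℕ} {A : Type} [Ring A] [Algebra K A]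
variable (π : FreeAlg K (Fin d) →ₐ[K] A) (hπ : MonomialPresentation K π)

/-- `w` is the leading word of `f`. -/
def IsLead (f : A) (w : NZ π) : Prop :=
  w ∈ ((bas π hπ).repr f).support ∧
    ∀ v ∈ ((bas π hπ).repr f).support, enc d (v : List (Fin d)) ≤ enc d (w : List (Fin d))

lemma isLead_exists {f : A} (hf : f ≠ 0) : ∃ w, IsLead π hπ f w := by
  have hne : (((bas π hπ).repr f).support).Nonempty := by
    rw [Finsupp.support_nonempty_iff]
    intro h0
    apply hf
    have := congrArg ((bas π hπ).repr.symm) h0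
    simpa using this
  obtain ⟨w, hw, hmax⟩ := Finset.exists_max_image (((bas π hπ).repr f).support)
    (fun v => enc d (v : List (Fin d))) hne
  exact ⟨w, hw, hmax⟩

lemma isLead_unique {f : A} {w w' : NZ π} (h : IsLead π hπ f w) (h' : IsLead π hπ f w') :
    w = w' := by
  have h1 := h.2 w' h'.1
  have h2 := h'.2 w h.1
  exact Subtype.ext (enc_injective d (le_antisymm h2 h1))

lemma isLead_ne_zero {f : A} {w : NZ π} (h : IsLead π hπ f w) : f ≠ 0 := by
  intro h0
  rw [h0] at h
  have := h.1
  simp at this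

lemma isLead_bas (w : NZ π) : IsLead π hπ (bas π hπ w) w := by
  constructor
  · rw [Basis.repr_self]
    simp
  · intro v hv
    rw [Basis.repr_self, Finsupp.support_single_ne_zero _ (one_ne_zero)] at hv
    simp only [Finset.mem_singleton] at hv
    rw [hv]

/-- Set of leading words of elements of `L`. -/
def leadSet (L : Submodule K A) : Set (NZ π) := {w | ∃ f ∈ L, IsLead π hπ f w}

/-- The monomial subspace spanned by leading monomials of `L`. -/
def tilde (L : Submodule K A) : Submodule K A :=
  Submodule.span K (bas π hπ '' leadSet π hπ L)

lemma tilde_fd (L : Submodule K A) (h : (leadSet π hπ L).Finite) :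
    FiniteDimensional K (tilde π hπ L) :=
  FiniteDimensional.span_of_finite K (h.image _)

lemma le_tilde {S : Set (NZ π)} {L : Submodule K A}
    (hS : ∀ w ∈ S, bas π hπ w ∈ L) : Submodule.span K (bas π hπ '' S) ≤ tilde π hπ L := by
  apply Submodule.span_mono
  apply Set.image_mono
  intro w hw
  exact ⟨bas π hπ w, hS w hw, isLead_bas π hπ w⟩

lemma leadSet_spec (L : Submodule K A) [FiniteDimensional K L] :
    (leadSet π hπ L).Finite ∧
      finrank K (tilde π hπ L) = finrank K L := by
  classical
  have hch : ∀ w : leadSet π hπ L, ∃ f, f ∈ L ∧ IsLead π hπ f w.1 := fun w => w.2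
  choose F hFL hFlead using hch
  -- linear independence of F
  have hind : LinearIndependent K F := by
    rw [linearIndependent_iff']
    intro s g hsum
    by_contra hcon
    push_neg at hcon
    obtain ⟨i₀, hi₀s, hi₀⟩ := hcon
    set s' : Finset (leadSet π hπ L) := s.filter (fun i => g i ≠ 0) with hs'
    have hne : s'.Nonempty := ⟨i₀, Finset.mem_filter.mpr ⟨hi₀s, hi₀⟩⟩
    obtain ⟨j, hjs', hjmax⟩ := Finset.exists_max_image s'
      (fun i => enc d (i.1 : List (Fin d))) hne
    have hjs : j ∈ s := (Finset.mem_filter.mp hjs').1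
    have hgj : g j ≠ 0 := (Finset.mem_filter.mp hjs').2
    have hzero : ((bas π hπ).repr (∑ i ∈ s, g i • F i)) j.1 = 0 := by
      rw [hsum, map_zero]; rfl
    rw [map_sum] at hzero
    rw [Finsupp.finset_sum_apply] at hzero
    have hterm : ∀ i ∈ s, i ≠ j → ((bas π hπ).repr (g i • F i)) j.1 = 0 := by
      intro i his hij
      by_cases hgi : g i = 0
      · rw [hgi, zero_smul, map_zero]; rfl
      · have his' : i ∈ s' := Finset.mem_filter.mpr ⟨his, hgi⟩
        have hle := hjmax i his'
        have hlt : enc d (i.1 : List (Fin d)) < enc d (j.1 : List (Fin d)) := by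
          rcases lt_or_eq_of_le hle with h | h
          · exact h
          · exfalso
            exact hij (Subtype.ext (Subtype.ext (enc_injective d h)))
        rw [map_smul, Finsupp.smul_apply]
        have hnot : j.1 ∉ ((bas π hπ).repr (F i)).support := by
          intro hmem
          have := (hFlead i).2 j.1 hmem
          omega
        rw [Finsupp.notMem_support_iff.mp hnot, smul_zero]
    rw [Finset.sum_eq_single j hterm (fun h => absurd hjs h)] at hzero
    rw [map_smul, Finsupp.smul_apply] at hzero
    have : ((bas π hπ).repr (F j)) j.1 ≠ 0 := Finsupp.mem_support_iff.mp (hFlead j).1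
    rcases mul_eq_zero.mp hzero with h | h
    · exact hgj h
    · exact this h
  -- finiteness
  have hfin : (leadSet π hπ L).Finite := by
    set G : leadSet π hπ L → L := fun w => ⟨F w, hFL w⟩ with hG
    have hindG : LinearIndependent K G := by
      apply LinearIndependent.of_comp L.subtype
      convert hind
      rfl
    have : Finite (leadSet π hπ L) := hindG.finite
    exact Set.toFinite _
  -- spanning
  have main : ∀ n : ℕ, ∀ f, f ∈ L → (∀ v ∈ ((bas π hπ).repr f).support,
      enc d (v : List (Fin d)) < n) → f ∈ Submodule.span K (Set.range F) := by
    intro n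
    induction n using Nat.strong_induction_on with
    | _ n ih =>
      intro f hf hbound
      by_cases hf0' : f = 0
      · rw [hf0']; exact Submodule.zero_mem _
      obtain ⟨w, hw⟩ := isLead_exists π hπ hf0'
      have hwL : w ∈ leadSet π hπ L := ⟨f, hf, hw⟩
      set w' : leadSet π hπ L := ⟨w, hwL⟩ with hw'
      set c : K := ((bas π hπ).repr f) w / ((bas π hπ).repr (F w')) w with hc
      set g : A := f - c • F w' with hgd
      have hgL : g ∈ L := Submodule.sub_mem _ hf (Submodule.smul_mem _ _ (hFL w'))
      have hgw : ((bas π hπ).repr g) w = 0 := by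
        rw [hgd, map_sub, map_smul, Finsupp.sub_apply, Finsupp.smul_apply, hc,
          smul_eq_mul, div_mul_cancel₀, sub_self]
        exact Finsupp.mem_support_iff.mp (hFlead w').1
      have hgsupp : ∀ v ∈ ((bas π hπ).repr g).support,
          enc d (v : List (Fin d)) < enc d (w : List (Fin d)) := by
        intro v hv
        have hvne : v ≠ w := by
          intro h
          rw [h] at hv
          exact Finsupp.mem_support_iff.mp hv hgw
        have hvsub : v ∈ ((bas π hπ).repr f).support ∪ ((bas π hπ).repr (c • F w')).support := by
          apply Finsupp.support_sub
          rw [hgd, map_sub] at hv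
          exact hv
        have hvle : enc d (v : List (Fin d)) ≤ enc d (w : List (Fin d)) := by
          rcases Finset.mem_union.mp hvsub with h | h
          · exact hw.2 v h
          · rw [map_smul] at h
            have := Finsupp.support_smul h
            exact (hFlead w').2 v this
        rcases lt_or_eq_of_le hvle with h | h
        · exact h
        · exact absurd (Subtype.ext (enc_injective d h)) hvne
      have hgmem : g ∈ Submodule.span K (Set.range F) := by
        have hwn : enc d (w : List (Fin d)) < n := hbound w hw.1
        exact ih (enc d (w : List (Fin d))) hwn g hgL hgsupp
      have : f = g + c • F w' := by rw [hgd]; abel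
      rw [this]
      exact Submodule.add_mem _ hgmem
        (Submodule.smul_mem _ _ (Submodule.subset_span ⟨w', rfl⟩))
  have hspan : L ≤ Submodule.span K (Set.range F) := by
    intro f hf
    exact main (((((bas π hπ).repr f).support).sup
      (fun v => enc d (v : List (Fin d)))) + 1) f hf
      (fun v hv => Nat.lt_succ_of_le
        (Finset.le_sup (f := fun v : NZ π => enc d (v : List (Fin d))) hv))
  -- conclusion
  haveI hfty : Fintype (leadSet π hπ L) := hfin.fintype
  have hle1 : Submodule.span K (Set.range F) ≤ L := by
    rw [Submodule.span_le]
    rintro x ⟨w, rfl⟩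
    exact hFL w
  haveI : FiniteDimensional K (Submodule.span K (Set.range F)) :=
    Submodule.finiteDimensional_of_le hle1
  have hcard1 : finrank K L = Fintype.card (leadSet π hπ L) := by
    have h := finrank_span_eq_card (R := K) hind
    have h2 : finrank K (Submodule.span K (Set.range F)) = finrank K L :=
      le_antisymm (Submodule.finrank_mono hle1) (Submodule.finrank_mono hspan)
    rw [← h2, h]
  have hindb : LinearIndependent K (fun w : leadSet π hπ L => bas π hπ w.1) := by
    have := (bas π hπ).linearIndependent
    exact this.comp (fun w : leadSet π hπ L => w.1) Subtype.val_injective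
  have hcard2 : finrank K (tilde π hπ L) = Fintype.card (leadSet π hπ L) := by
    have himg : bas π hπ '' leadSet π hπ L =
        Set.range (fun w : leadSet π hπ L => bas π hπ w.1) := by
      rw [Set.image_eq_range]
    rw [tilde, himg]
    exact finrank_span_eq_card hindb
  exact ⟨hfin, by rw [hcard1, hcard2]⟩

end Lead


section Mul

variable {K : Type} [Field K] {d : ℕ} {A : Type} [Ring A] [Algebra K A]
variable (π : FreeAlg K (Fin d) →ₐ[K] A) (hπ : MonomialPresentation K π)

lemma repr_wrd_eq (w : List (Fin d)) [Decidable (w ∈ NZ π)] :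
    (bas π hπ).repr (π (wrd K w)) =
      if h : w ∈ NZ π then Finsupp.single (⟨w, h⟩ : NZ π) 1 else 0 := by
  split
  · next h =>
      have : π (wrd K w) = bas π hπ ⟨w, h⟩ := (bas_apply π hπ ⟨w, h⟩).symm
      rw [this, Basis.repr_self]
  · next h =>
      have : π (wrd K w) = 0 := not_not.mp (fun hne => h hne)
      rw [this, map_zero]

lemma repr_mul_wrd (f : A) (x : List (Fin d)) :
    (bas π hπ).repr (f * π (wrd K x)) =
      ∑ w ∈ ((bas π hπ).repr f).support,
        ((bas π hπ).repr f) w • (bas π hπ).repr (π (wrd K ((w : List (Fin d)) ++ x))) := by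
  conv_lhs => rw [← Basis.linearCombination_repr (bas π hπ) f]
  rw [Finsupp.linearCombination_apply, Finsupp.sum, Finset.sum_mul, map_sum]
  apply Finset.sum_congr rfl
  intro w _
  rw [smul_mul_assoc, map_smul]
  congr 2
  rw [bas_apply, wrd_append, map_mul]

lemma isLead_mul {f : A} {u : NZ π} (hf : IsLead π hπ f u) (x : List (Fin d))
    (hne : (u : List (Fin d)) ++ x ∈ NZ π) :
    IsLead π hπ (f * π (wrd K x)) ⟨(u : List (Fin d)) ++ x, hne⟩ := by
  classical
  set z₀ : NZ π := ⟨(u : List (Fin d)) ++ x, hne⟩ with hz₀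
  have hval : ((bas π hπ).repr (f * π (wrd K x))) z₀ = ((bas π hπ).repr f) u := by
    rw [repr_mul_wrd, Finsupp.finset_sum_apply]
    have key : ∀ w ∈ ((bas π hπ).repr f).support,
        (((bas π hπ).repr f) w • (bas π hπ).repr (π (wrd K ((w : List (Fin d)) ++ x)))) z₀ =
          if w = u then ((bas π hπ).repr f) w else 0 := by
      intro w _
      rw [Finsupp.smul_apply, repr_wrd_eq, smul_eq_mul]
      split
      · next h =>
          rw [Finsupp.single_apply]
          by_cases hwu : w = u
          · subst hwu
            rw [if_pos rfl, if_pos, mul_one]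
            exact Subtype.ext rfl
          · rw [if_neg, if_neg hwu, mul_zero]
            intro hc
            apply hwu
            have : (w : List (Fin d)) ++ x = (u : List (Fin d)) ++ x := congrArg Subtype.val hc
            exact Subtype.ext (List.append_cancel_right this)
      · next h =>
          by_cases hwu : w = u
          · exact absurd (hwu ▸ hne) h
          · rw [if_neg hwu]
            simp
    rw [Finset.sum_congr rfl key, Finset.sum_ite_eq' _ u (fun w => ((bas π hπ).repr f) w),
      if_pos hf.1]
  constructor
  · rw [Finsupp.mem_support_iff, hval]
    exact Finsupp.mem_support_iff.mp hf.1
  · intro v hv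
    rw [Finsupp.mem_support_iff, repr_mul_wrd, Finsupp.finset_sum_apply] at hv
    obtain ⟨w, hw, hwne⟩ := Finset.exists_ne_zero_of_sum_ne_zero hv
    have hvw : v = ⟨(w : List (Fin d)) ++ x,
        by
          by_contra hc
          rw [Finsupp.smul_apply, repr_wrd_eq, dif_neg hc] at hwne
          simp at hwne⟩ := by
      by_contra hc
      apply hwne
      rw [Finsupp.smul_apply, repr_wrd_eq]
      split
      · next h =>
          rw [Finsupp.single_apply, if_neg, smul_zero]
          intro he
          exact hc (Subtype.ext (congrArg Subtype.val he.symm))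
      · simp
    have : enc d (v : List (Fin d)) = enc d ((w : List (Fin d)) ++ x) := by rw [hvw]
    rw [this]
    exact enc_append_le d (hf.2 w hw) x

lemma bas_image_eq (T : Set (NZ π)) :
    bas π hπ '' T = (fun w : List (Fin d) => π (wrd K w)) '' (Subtype.val '' T) := by
  rw [Set.image_image]
  exact Set.image_congr (fun w _ => bas_apply π hπ w)

lemma tilde_mul_le (L V : Submodule K A) (S : Set (List (Fin d)))
    (hV : V = Submodule.span K ((fun w : List (Fin d) => π (wrd K w)) '' S)) :
    tilde π hπ L * V ≤ tilde π hπ (L * V) := by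
  conv_lhs => rw [tilde, hV, Submodule.span_mul_span]
  rw [Submodule.span_le]
  rintro y hy
  rw [Set.mem_mul] at hy
  obtain ⟨b1, hb1, b2, hb2, rfl⟩ := hy
  obtain ⟨w, hwL, rfl⟩ := hb1
  obtain ⟨x, hxS, rfl⟩ := hb2
  have hprod : bas π hπ w * π (wrd K x) = π (wrd K ((w : List (Fin d)) ++ x)) := by
    rw [bas_apply, wrd_append, map_mul]
  by_cases h : (w : List (Fin d)) ++ x ∈ NZ π
  · obtain ⟨f, hfL, hflead⟩ := hwL
    have hxV : π (wrd K x) ∈ V := by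
      rw [hV]
      exact Submodule.subset_span ⟨x, hxS, rfl⟩
    have hmem : f * π (wrd K x) ∈ L * V := Submodule.mul_mem_mul hfL hxV
    have hlead := isLead_mul π hπ hflead x h
    have : bas π hπ w * π (wrd K x) ∈ bas π hπ '' leadSet π hπ (L * V) := by
      refine ⟨⟨(w : List (Fin d)) ++ x, h⟩, ⟨f * π (wrd K x), hmem, hlead⟩, ?_⟩
      rw [bas_apply]
      exact hprod.symm
    exact Submodule.subset_span this
  · have h0 : π (wrd K ((w : List (Fin d)) ++ x)) = 0 := not_not.mp (fun hne => h hne)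
    rw [SetLike.mem_coe, hprod, h0]
    exact Submodule.zero_mem _

/-- words appearing in elements of `L` -/
def wordsOf (L : Submodule K A) : Set (NZ π) :=
  {w | ∃ v ∈ L, w ∈ ((bas π hπ).repr v).support}

lemma wordsOf_finite (L : Submodule K A) [FiniteDimensional K L] :
    (wordsOf π hπ L).Finite := by
  classical
  obtain ⟨s, hs⟩ := (Submodule.fg_iff_finiteDimensional L).mpr ‹_›
  have key : ∀ v, v ∈ Submodule.span K (s : Set A) → ∀ w : NZ π,
      w ∈ ((bas π hπ).repr v).support →
      w ∈ ⋃ v ∈ (s : Set A), (((bas π hπ).repr v).support : Set (NZ π)) := by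
    intro v hv
    induction hv using Submodule.span_induction with
    | mem y hy => exact fun w hw => Set.mem_biUnion hy hw
    | zero => intro w hw; simp at hw
    | add y z _ _ hy hz =>
        intro w hw
        have hadd := Finsupp.support_add (g₁ := (bas π hπ).repr y) (g₂ := (bas π hπ).repr z)
        rw [map_add] at hw
        rcases Finset.mem_union.mp (hadd hw) with h | h
        · exact hy w h
        · exact hz w h
    | smul c y _ hy =>
        intro w hw
        rw [map_smul] at hw
        exact hy w (Finsupp.support_smul hw)
  have hsub : wordsOf π hπ L ⊆ ⋃ v ∈ (s : Set A), (((bas π hπ).repr v).support : Set (NZ π)) := by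
    rintro w ⟨v, hv, hw⟩
    rw [← hs] at hv
    exact key v hv w hw
  exact Set.Finite.subset (Set.Finite.biUnion s.finite_toSet (fun v _ => (((bas π hπ).repr v).support).finite_toSet)) hsub

lemma le_span_wordsOf (L : Submodule K A) :
    L ≤ Submodule.span K (bas π hπ '' wordsOf π hπ L) := by
  intro v hv
  have hrepr := Basis.linearCombination_repr (bas π hπ) v
  rw [Finsupp.linearCombination_apply, Finsupp.sum] at hrepr
  rw [← hrepr]
  apply Submodule.sum_mem
  intro w hw
  apply Submodule.smul_mem
  exact Submodule.subset_span ⟨w, ⟨v, hv, hw⟩, rfl⟩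

end Mul


section Assemble

variable {K : Type} [Field K] {d : ℕ} {A : Type} [Ring A] [Algebra K A]
variable (π : FreeAlg K (Fin d) →ₐ[K] A) (hπ : MonomialPresentation K π)

lemma tilde_monomial (L : Submodule K A) : MonomialSubspace K π (tilde π hπ L) :=
  ⟨Subtype.val '' leadSet π hπ L, by rw [tilde, bas_image_eq]⟩

lemma RInv_one_le_finrank {L V : Submodule K A} {ε : ℝ} (h : RInv K L V ε) :
    1 ≤ finrank K L := by
  by_contra hc
  have h0 : finrank K L = 0 := by omega
  have := h.2.2
  rw [h0] at this
  simp only [Nat.cast_zero, mul_zero] at this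
  exact absurd this (not_lt.mpr (Nat.cast_nonneg _))

lemma tilde_invariant {L V V' : Submodule K A} {ε : ℝ} (S : Set (List (Fin d)))
    (hV'S : V' = Submodule.span K ((fun w : List (Fin d) => π (wrd K w)) '' S))
    (hVV' : V ≤ V') (h : RInv K L V' ε) : RInv K (tilde π hπ L) V ε := by
  obtain ⟨hfdL, hfdLV, hlt⟩ := h
  haveI := hfdL; haveI := hfdLV
  obtain ⟨hfinL, hrkL⟩ := leadSet_spec π hπ L
  obtain ⟨hfinLV, hrkLV⟩ := leadSet_spec π hπ (L * V')
  haveI h1 : FiniteDimensional K (tilde π hπ L) := tilde_fd π hπ L hfinL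
  haveI h2 : FiniteDimensional K (tilde π hπ (L * V')) := tilde_fd π hπ _ hfinLV
  have hle : tilde π hπ L * V ≤ tilde π hπ (L * V') :=
    le_trans (mul_le_mul' le_rfl hVV') (tilde_mul_le π hπ L V' S hV'S)
  haveI h3 : FiniteDimensional K (tilde π hπ L * V : Submodule K A) :=
    Submodule.finiteDimensional_of_le hle
  refine ⟨h1, h3, ?_⟩
  have hnn : finrank K (tilde π hπ L * V : Submodule K A) ≤ finrank K (L * V' : Submodule K A) := by
    rw [← hrkLV]; exact Submodule.finrank_mono hle
  rw [hrkL]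
  calc (finrank K (tilde π hπ L * V : Submodule K A) : ℝ)
      ≤ (finrank K (L * V' : Submodule K A) : ℝ) := Nat.cast_le.mpr hnn
    _ < (1 + ε) * (finrank K L : ℝ) := hlt

lemma genV_eq : genV K π = Submodule.span K
    ((fun w : List (Fin d) => π (wrd K w)) '' ({[]} ∪ Set.range (fun i : Fin d => [i]))) := by
  rw [genV]
  congr 1
  rw [Set.image_union, Set.image_singleton, wrd_nil, map_one]
  congr 1
  rw [← Set.range_comp]
  rfl

lemma genV_fd : FiniteDimensional K (genV K π) := by
  rw [genV]
  apply FiniteDimensional.span_of_finite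
  exact (Set.finite_singleton 1).union (Set.finite_range _)

lemma one_mem_genV : (1 : A) ∈ genV K π :=
  Submodule.subset_span (Set.mem_union_left _ rfl)

lemma le_mul_genV (L : Submodule K A) : L ≤ L * genV K π := by
  intro l hl
  have := Submodule.mul_mem_mul hl (one_mem_genV π)
  rwa [mul_one] at this

end Assemble


/-- monomial invariant subspaces and monomial Følner sequences.
Let `A` be a monomial algebra over a field `K`. If `A` is amenable as a right module over
itself, then for every finite-dimensional subspace `V ≤ A` and every `ε > 0` there is a
`(V, ε)`-invariant finite-dimensional subspace of `A` spanned by monomials. Furthermore,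
if `A` is exhaustively amenable as a right module over itself, then `A` has a Følner
sequence consisting of subspaces spanned by monomials. -/
theorem stmt2 (K : Type) [Field K] (d : ℕ) (hd : 1 ≤ d)
    (A : Type) [Ring A] [Algebra K A] (π : FreeAlg K (Fin d) →ₐ[K] A)
    (hπ : MonomialPresentation K π) :
    (RightSelfAmenable K A →
      ∀ V : Submodule K A, FiniteDimensional K V → ∀ ε : ℝ, 0 < ε →
        ∃ L : Submodule K A, MonomialSubspace K π L ∧ RInv K L V ε) ∧
    (RightSelfExhAmenable K A →
      ∃ L : ℕ → Submodule K A, (∀ n, MonomialSubspace K π (L n)) ∧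
        FolnerSeq K (genV K π) L) := by
  constructor
  · intro hAm V hVfd ε hε
    haveI := hVfd
    set V' := Submodule.span K (bas π hπ '' wordsOf π hπ V) with hV'
    haveI hV'fd : FiniteDimensional K V' :=
      FiniteDimensional.span_of_finite K ((wordsOf_finite π hπ V).image _)
    obtain ⟨L, hL⟩ := hAm V' hV'fd ε hε
    refine ⟨tilde π hπ L, tilde_monomial π hπ L, ?_⟩
    exact tilde_invariant π hπ (Subtype.val '' wordsOf π hπ V)
      (by rw [bas_image_eq]) (le_span_wordsOf π hπ V) hL
  · intro hExh
    have hgfd : FiniteDimensional K (genV K π) := genV_fd π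
    have key : ∀ ε : ℝ, 0 < ε → ∀ S : Set (NZ π), S.Finite →
        ∃ T : Set (NZ π), T.Finite ∧ S ⊆ T ∧
          RInv K (Submodule.span K (bas π hπ '' T)) (genV K π) ε := by
      intro ε hε S hS
      haveI hWfd : FiniteDimensional K (Submodule.span K (bas π hπ '' S)) :=
        FiniteDimensional.span_of_finite K (hS.image _)
      obtain ⟨L, hWL, hL⟩ := hExh (genV K π) hgfd ε hε _ hWfd
      haveI := hL.1
      refine ⟨leadSet π hπ L, (leadSet_spec π hπ L).1, ?_, ?_⟩
      · intro w hw
        exact ⟨bas π hπ w, hWL (Submodule.subset_span ⟨w, hw, rfl⟩), isLead_bas π hπ w⟩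
      · exact tilde_invariant π hπ _ (genV_eq π) (le_refl _) hL
    choose T hTfin hTsub hTinv using key
    set ε' : ℕ → ℝ := fun n => 1 / (n + 1) with hε'
    have hεpos : ∀ n : ℕ, (0:ℝ) < ε' n := fun n => by positivity
    set base : ℕ → Set (NZ π) := fun n => {w : NZ π | enc d (w : List (Fin d)) ≤ n}
      with hbase
    have hbasefin : ∀ n, (base n).Finite := fun n =>
      Set.Finite.preimage Subtype.val_injective.injOn (enc_finite_le d n)
    have hseq : ∃ Tseq : ℕ → {S : Set (NZ π) // S.Finite},
        (∀ n, ((Tseq n : Set (NZ π)) ∪ base (n+1)) ⊆ (Tseq (n+1) : Set (NZ π))) ∧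
        (base 0 ⊆ (Tseq 0 : Set (NZ π))) ∧
        (∀ n, RInv K (Submodule.span K (bas π hπ '' (Tseq n : Set (NZ π))))
          (genV K π) (ε' n)) := by
      refine ⟨fun n => Nat.rec
        (⟨T (ε' 0) (hεpos 0) (base 0) (hbasefin 0), hTfin _ _ _ _⟩ :
          {S : Set (NZ π) // S.Finite})
        (fun m prev => ⟨T (ε' (m+1)) (hεpos (m+1)) ((prev : Set (NZ π)) ∪ base (m+1))
          (prev.2.union (hbasefin (m+1))), hTfin _ _ _ _⟩) n, ?_, ?_, ?_⟩
      · intro n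
        exact hTsub _ _ _ _
      · exact hTsub _ _ _ _
      · intro n
        cases n with
        | zero => exact hTinv _ _ _ _
        | succ m => exact hTinv _ _ _ _
    obtain ⟨Tseq, hTsucc, hTzero, hTinv'⟩ := hseq
    have hbaseT : ∀ n, base n ⊆ (Tseq n : Set (NZ π)) := by
      intro n
      cases n with
      | zero => exact hTzero
      | succ m => exact le_trans Set.subset_union_right (hTsucc m)
    set Lseq : ℕ → Submodule K A :=
      fun n => Submodule.span K (bas π hπ '' (Tseq n : Set (NZ π))) with hLseq
    have hmonoL : ∀ n, Lseq n ≤ Lseq (n+1) := by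
      intro n
      apply Submodule.span_mono
      apply Set.image_mono
      exact le_trans Set.subset_union_left (hTsucc n)
    have hfdL : ∀ n, FiniteDimensional K (Lseq n) := fun n => (hTinv' n).1
    have hfdLV : ∀ n, FiniteDimensional K (Lseq n * genV K π : Submodule K A) :=
      fun n => (hTinv' n).2.1
    have hposL : ∀ n, (0:ℝ) < (finrank K (Lseq n) : ℝ) := by
      intro n
      have h1 : 1 ≤ finrank K (Lseq n) := RInv_one_le_finrank (hTinv' n)
      exact_mod_cast Nat.lt_of_lt_of_le Nat.zero_lt_one h1
    refine ⟨Lseq, fun n => ⟨Subtype.val '' (Tseq n : Set (NZ π)), by show Submodule.span K (bas π hπ '' (Tseq n : Set (NZ π))) = _; rw [bas_image_eq]⟩,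
      monotone_nat_of_le_succ hmonoL, hfdL, ?_, ?_⟩
    · rw [eq_top_iff, ← (bas π hπ).span_eq, Submodule.span_le]
      rintro a ⟨w, rfl⟩
      have h1 : bas π hπ w ∈ Lseq (enc d (w : List (Fin d))) :=
        Submodule.subset_span ⟨w, hbaseT _ (show enc d (w : List (Fin d)) ≤ enc d (w : List (Fin d)) from le_refl _), rfl⟩
      exact Submodule.mem_iSup_of_mem _ h1
    · have hlow : ∀ n : ℕ, (1:ℝ) ≤
          (finrank K (Lseq n * genV K π : Submodule K A) : ℝ) / (finrank K (Lseq n) : ℝ) := by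
        intro n
        haveI := hfdLV n
        rw [one_le_div (hposL n)]
        exact_mod_cast Nat.cast_le.mpr (Submodule.finrank_mono (le_mul_genV π (Lseq n)))
      have hup : ∀ n : ℕ,
          (finrank K (Lseq n * genV K π : Submodule K A) : ℝ) / (finrank K (Lseq n) : ℝ)
            ≤ 1 + ε' n := by
        intro n
        exact le_of_lt ((div_lt_iff₀ (hposL n)).mpr (hTinv' n).2.2)
      have hupper : Tendsto (fun n : ℕ => 1 + ε' n) atTop (nhds 1) := by
        have h0 := tendsto_one_div_add_atTop_nhds_zero_nat (𝕜 := ℝ)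
        have h1 := h0.const_add (1:ℝ)
        rw [add_zero] at h1
        exact h1
      exact tendsto_of_tendsto_of_tendsto_of_le_of_le' tendsto_const_nhds hupper
        (Filter.Eventually.of_forall hlow) (Filter.Eventually.of_forall hup)


end Paper
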